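/- Let ∂ : V → V be the boundary map of the 29-generator chain complex associated to the overtwisted contact structure on S³. Then ∂ ∘ ∂ = 0, the rank of ∂ equals 14, and the kernel of ∂ has dimension 15 over the field with two elements. -/

import Mathlib

/-- The basis vectors `X, A, B₁₁, B₁₂, B₂₁, B₂₂, C₁₁, C₁₂, C₂₁, C₂₂, D₁₁, D₁₂, D₂₁,
D₂₂, E₁, E₂, F₁, F₂, F₃, G₁, G₂, G₃, H₁, H₂, I₁, I₂, J, K₁, K₂` (in this order) of the
29-dimensional vector space `V = (Fin 29 → ZMod 2)` over the field with two elements. -/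
def e (i : Fin 29) : Fin 29 → ZMod 2 := Pi.single i 1

/-- 14 explicit vectors spanning the range of the boundary map. -/
def vv : Fin 14 → (Fin 29 → ZMod 2) :=
  ![e 0 + e 5, e 3 + e 8 + e 16, e 2 + e 9, e 12, e 7 + e 13 + e 14, e 9 + e 15,
    e 0 + e 17, e 0, e 1 + e 10 + e 16 + e 20, e 1 + e 18, e 1 + e 4 + e 26, e 4,
    e 8 + e 23 + e 24, e 9 + e 21 + e 22 + e 25]

/-- Pivot coordinates. -/
def pp : Fin 14 → Fin 29 := ![5, 3, 2, 12, 7, 15, 17, 0, 10, 18, 1, 4, 8, 9]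

/-- The pivot matrix. -/
def NN : Matrix (Fin 14) (Fin 14) (ZMod 2) := Matrix.of fun i j => vv i (pp j)

theorem NN_tri : NN.BlockTriangular id := by
  intro i j h
  revert h
  show j < i → NN i j = 0
  revert i j
  show ∀ i j : Fin 14, j < i → vv i (pp j) = 0
  decide

theorem NN_det : NN.det = 1 := by
  rw [Matrix.det_of_upperTriangular NN_tri]
  decide

theorem vv_li : LinearIndependent (ZMod 2) vv := by
  have h1 : LinearIndependent (ZMod 2) (fun i => NN i) :=
    Matrix.linearIndependent_rows_iff_isUnit.2
      ((Matrix.isUnit_iff_isUnit_det NN).2 (by rw [NN_det]; exact isUnit_one))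
  exact LinearIndependent.of_comp (LinearMap.funLeft (ZMod 2) (ZMod 2) pp) h1

set_option maxHeartbeats 2000000 in
/-- The boundary map `∂` of the 29-generator chain complex associated to the overtwisted
contact structure on `S³` satisfies `∂ ∘ ∂ = 0`, has rank `14`, and its kernel is
`15`-dimensional over the field with two elements. -/
theorem stmt13 (D : (Fin 29 → ZMod 2) →ₗ[ZMod 2] (Fin 29 → ZMod 2))
    (hX : D (e 0) = 0)
    (hA : D (e 1) = e 0)
    (hB11 : D (e 2) = e 4)
    (hB12 : D (e 3) = e 0 + e 5)
    (hB21 : D (e 4) = 0)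
    (hB22 : D (e 5) = 0)
    (hC11 : D (e 6) = e 3 + e 8 + e 16)
    (hC12 : D (e 7) = e 2 + e 9)
    (hC21 : D (e 8) = e 5 + e 17)
    (hC22 : D (e 9) = e 4)
    (hD11 : D (e 10) = e 12)
    (hD12 : D (e 11) = e 7 + e 13 + e 14)
    (hD21 : D (e 12) = 0)
    (hD22 : D (e 13) = e 9 + e 15)
    (hE1 : D (e 14) = e 2 + e 15)
    (hE2 : D (e 15) = e 4)
    (hF1 : D (e 16) = e 0 + e 17)
    (hF2 : D (e 17) = 0)
    (hF3 : D (e 18) = e 0)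
    (hG1 : D (e 19) = e 1 + e 10 + e 16 + e 20)
    (hG2 : D (e 20) = e 12 + e 17)
    (hG3 : D (e 21) = e 1 + e 18)
    (hH1 : D (e 22) = e 1 + e 4 + e 26)
    (hH2 : D (e 23) = e 5)
    (hI1 : D (e 24) = e 17)
    (hI2 : D (e 25) = e 18 + e 26)
    (hJ : D (e 26) = e 0)
    (hK1 : D (e 27) = e 8 + e 23 + e 24)
    (hK2 : D (e 28) = e 9 + e 21 + e 22 + e 25)
    :
    D ∘ₗ D = 0 ∧
    Module.finrank (ZMod 2) ↥(LinearMap.range D) = 14 ∧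
    Module.finrank (ZMod 2) ↥(LinearMap.ker D) = 15 := by
  have hDD : D ∘ₗ D = 0 := by
    apply (Pi.basisFun (ZMod 2) (Fin 29)).ext
    intro i
    rw [LinearMap.comp_apply, LinearMap.zero_apply, Pi.basisFun_apply]
    show D (D (e i)) = 0
    fin_cases i
    · show D (D (e 0)) = 0
      rw [hX, map_zero]
    · show D (D (e 1)) = 0
      rw [hA, hX]
      all_goals decide
    · show D (D (e 2)) = 0
      rw [hB11, hB21]
      all_goals decide
    · show D (D (e 3)) = 0
      rw [hB12, map_add, hX, hB22]
      all_goals decide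
    · show D (D (e 4)) = 0
      rw [hB21, map_zero]
    · show D (D (e 5)) = 0
      rw [hB22, map_zero]
    · show D (D (e 6)) = 0
      rw [hC11, map_add, map_add, hB12, hC21, hF1]
      all_goals decide
    · show D (D (e 7)) = 0
      rw [hC12, map_add, hB11, hC22]
      all_goals decide
    · show D (D (e 8)) = 0
      rw [hC21, map_add, hB22, hF2]
      all_goals decide
    · show D (D (e 9)) = 0
      rw [hC22, hB21]
      all_goals decide
    · show D (D (e 10)) = 0
      rw [hD11, hD21]
      all_goals decide
    · show D (D (e 11)) = 0
      rw [hD12, map_add, map_add, hC12, hD22, hE1]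
      all_goals decide
    · show D (D (e 12)) = 0
      rw [hD21, map_zero]
    · show D (D (e 13)) = 0
      rw [hD22, map_add, hC22, hE2]
      all_goals decide
    · show D (D (e 14)) = 0
      rw [hE1, map_add, hB11, hE2]
      all_goals decide
    · show D (D (e 15)) = 0
      rw [hE2, hB21]
      all_goals decide
    · show D (D (e 16)) = 0
      rw [hF1, map_add, hX, hF2]
      all_goals decide
    · show D (D (e 17)) = 0
      rw [hF2, map_zero]
    · show D (D (e 18)) = 0
      rw [hF3, hX]
      all_goals decide
    · show D (D (e 19)) = 0
      rw [hG1, map_add, map_add, map_add, hA, hD11, hF1, hG2]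
      all_goals decide
    · show D (D (e 20)) = 0
      rw [hG2, map_add, hD21, hF2]
      all_goals decide
    · show D (D (e 21)) = 0
      rw [hG3, map_add, hA, hF3]
      all_goals decide
    · show D (D (e 22)) = 0
      rw [hH1, map_add, map_add, hA, hB21, hJ]
      all_goals decide
    · show D (D (e 23)) = 0
      rw [hH2, hB22]
      all_goals decide
    · show D (D (e 24)) = 0
      rw [hI1, hF2]
      all_goals decide
    · show D (D (e 25)) = 0
      rw [hI2, map_add, hF3, hJ]
      all_goals decide
    · show D (D (e 26)) = 0
      rw [hJ, hX]
      all_goals decide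
    · show D (D (e 27)) = 0
      rw [hK1, map_add, map_add, hC21, hH2, hI1]
      all_goals decide
    · show D (D (e 28)) = 0
      rw [hK2, map_add, map_add, map_add, hC22, hG3, hH1, hI2]
      all_goals decide
  set S := Submodule.span (ZMod 2) (Set.range vv) with hS
  have hv : ∀ j, vv j ∈ S := fun j => Submodule.subset_span ⟨j, rfl⟩
  have hmem : ∀ j, vv j ∈ LinearMap.range D := by
    intro j
    fin_cases j
    · exact ⟨e 3, hB12⟩
    · exact ⟨e 6, hC11⟩
    · exact ⟨e 7, hC12⟩
    · exact ⟨e 10, hD11⟩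
    · exact ⟨e 11, hD12⟩
    · exact ⟨e 13, hD22⟩
    · exact ⟨e 16, hF1⟩
    · exact ⟨e 1, hA⟩
    · exact ⟨e 19, hG1⟩
    · exact ⟨e 21, hG3⟩
    · exact ⟨e 22, hH1⟩
    · exact ⟨e 2, hB11⟩
    · exact ⟨e 27, hK1⟩
    · exact ⟨e 28, hK2⟩
  have hle1 : S ≤ LinearMap.range D :=
    Submodule.span_le.2 (Set.range_subset_iff.2 hmem)
  have hle2 : LinearMap.range D ≤ S := by
    rw [LinearMap.range_eq_map, ← (Pi.basisFun (ZMod 2) (Fin 29)).span_eq,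
      Submodule.map_span, Submodule.span_le]
    rintro y ⟨x, ⟨i, rfl⟩, rfl⟩
    rw [Pi.basisFun_apply]
    show D (e i) ∈ S
    fin_cases i
    · show D (e 0) ∈ S
      rw [hX]
      exact zero_mem _
    · show D (e 1) ∈ S
      rw [hA]
      exact hv 7
    · show D (e 2) ∈ S
      rw [hB11]
      exact hv 11
    · show D (e 3) ∈ S
      rw [hB12]
      exact hv 0
    · show D (e 4) ∈ S
      rw [hB21]
      exact zero_mem _
    · show D (e 5) ∈ S
      rw [hB22]
      exact zero_mem _
    · show D (e 6) ∈ S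
      rw [hC11]
      exact hv 1
    · show D (e 7) ∈ S
      rw [hC12]
      exact hv 2
    · show D (e 8) ∈ S
      have h : D (e 8) = vv 0 + vv 6 := by rw [hC21]; decide
      rw [h]
      exact add_mem (hv 0) (hv 6)
    · show D (e 9) ∈ S
      rw [hC22]
      exact hv 11
    · show D (e 10) ∈ S
      rw [hD11]
      exact hv 3
    · show D (e 11) ∈ S
      rw [hD12]
      exact hv 4
    · show D (e 12) ∈ S
      rw [hD21]
      exact zero_mem _
    · show D (e 13) ∈ S
      rw [hD22]
      exact hv 5
    · show D (e 14) ∈ S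
      have h : D (e 14) = vv 2 + vv 5 := by rw [hE1]; decide
      rw [h]
      exact add_mem (hv 2) (hv 5)
    · show D (e 15) ∈ S
      rw [hE2]
      exact hv 11
    · show D (e 16) ∈ S
      rw [hF1]
      exact hv 6
    · show D (e 17) ∈ S
      rw [hF2]
      exact zero_mem _
    · show D (e 18) ∈ S
      rw [hF3]
      exact hv 7
    · show D (e 19) ∈ S
      rw [hG1]
      exact hv 8
    · show D (e 20) ∈ S
      have h : D (e 20) = vv 3 + vv 6 + vv 7 := by rw [hG2]; decide
      rw [h]
      exact add_mem (add_mem (hv 3) (hv 6)) (hv 7)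
    · show D (e 21) ∈ S
      rw [hG3]
      exact hv 9
    · show D (e 22) ∈ S
      rw [hH1]
      exact hv 10
    · show D (e 23) ∈ S
      have h : D (e 23) = vv 0 + vv 7 := by rw [hH2]; decide
      rw [h]
      exact add_mem (hv 0) (hv 7)
    · show D (e 24) ∈ S
      have h : D (e 24) = vv 6 + vv 7 := by rw [hI1]; decide
      rw [h]
      exact add_mem (hv 6) (hv 7)
    · show D (e 25) ∈ S
      have h : D (e 25) = vv 9 + vv 10 + vv 11 := by rw [hI2]; decide
      rw [h]
      exact add_mem (add_mem (hv 9) (hv 10)) (hv 11)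
    · show D (e 26) ∈ S
      rw [hJ]
      exact hv 7
    · show D (e 27) ∈ S
      rw [hK1]
      exact hv 12
    · show D (e 28) ∈ S
      rw [hK2]
      exact hv 13
  have hrange : LinearMap.range D = S := le_antisymm hle2 hle1
  have hfr : Module.finrank (ZMod 2) ↥(LinearMap.range D) = 14 := by
    rw [hrange, hS, finrank_span_eq_card vv_li, Fintype.card_fin]
  have hrn := LinearMap.finrank_range_add_finrank_ker D
  rw [hfr, Module.finrank_fin_fun] at hrn
  exact ⟨hDD, hfr, by omega⟩
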